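/- Let f : (0,∞) → ℝ be a measurable function bounded above by ln M for some M ≥ 1, and suppose ω_c > 0 is a point at which the function ω ↦ f(ω)/ω² attains its supremum over (0,∞). If ∫₀^∞ f(ω)/ω² dω ≥ K for some K ≥ 0, then M ≥ exp(ω_c · K / 2). -/

import Mathlib

open MeasureTheory Set

theorem stmt0 (f : ℝ → ℝ) (M K ωc : ℝ)
    (hf : Measurable f) (hM : 1 ≤ M)
    (hbound : ∀ ω ∈ Ioi (0:ℝ), f ω ≤ Real.log M)
    (hωc : 0 < ωc)
    (hsup : ∀ ω ∈ Ioi (0:ℝ), f ω / ω ^ 2 ≤ f ωc / ωc ^ 2)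
    (hK : 0 ≤ K)
    (hint : K ≤ ∫ ω in Ioi (0:ℝ), f ω / ω ^ 2) :
    Real.exp (ωc * K / 2) ≤ M := by
  have hM0 : (0:ℝ) < M := lt_of_lt_of_le one_pos hM
  have hlogM : 0 ≤ Real.log M := Real.log_nonneg hM
  set g : ℝ → ℝ := fun ω => f ω / ω ^ 2 with hg
  by_cases hI : IntegrableOn g (Ioi (0:ℝ)) volume
  · -- main case
    have hIoc : IntegrableOn g (Ioc 0 ωc) volume :=
      hI.mono_set Ioc_subset_Ioi_self
    have hIoi : IntegrableOn g (Ioi ωc) volume :=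
      hI.mono_set (Ioi_subset_Ioi hωc.le)
    have h1 : ∫ ω in Ioc (0:ℝ) ωc, g ω ≤ Real.log M / ωc := by
      have hconst : IntegrableOn (fun _ : ℝ => f ωc / ωc ^ 2) (Ioc 0 ωc) volume :=
        integrableOn_const (by simp [Real.volume_Ioc])
      have hmono := setIntegral_mono_on hIoc hconst measurableSet_Ioc
        (fun x hx => hsup x (mem_Ioi.2 hx.1))
      have hconstval : ∫ _ω in Ioc (0:ℝ) ωc, (f ωc / ωc ^ 2) = ωc * (f ωc / ωc ^ 2) := by
        rw [setIntegral_const, measureReal_def, Real.volume_Ioc, smul_eq_mul,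
          ENNReal.toReal_ofReal (by linarith)]
        ring_nf
      calc ∫ ω in Ioc (0:ℝ) ωc, g ω ≤ ωc * (f ωc / ωc ^ 2) := by rw [← hconstval]; exact hmono
        _ = f ωc / ωc := by field_simp
        _ ≤ Real.log M / ωc := by
            gcongr
            exact hbound ωc (mem_Ioi.2 hωc)
    have h2 : ∫ ω in Ioi ωc, g ω ≤ Real.log M / ωc := by
      have hIrpow : IntegrableOn (fun x : ℝ => x ^ (-2:ℝ)) (Ioi ωc) volume :=
        integrableOn_Ioi_rpow_of_lt (by norm_num) hωc
      have hIh : IntegrableOn (fun x : ℝ => Real.log M * x ^ (-2:ℝ)) (Ioi ωc) volume :=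
        hIrpow.const_mul _
      have hmono := setIntegral_mono_on hIoi hIh measurableSet_Ioi
        (fun x hx => by
          have hx0 : (0:ℝ) < x := hωc.trans hx
          have : x ^ (-2:ℝ) = 1 / x ^ 2 := by
            rw [Real.rpow_neg hx0.le, Real.rpow_two, one_div]
          rw [this]
          rw [mul_one_div]
          exact div_le_div_of_nonneg_right (hbound x (mem_Ioi.2 hx0)) (by positivity) )
      have hval : ∫ x in Ioi ωc, Real.log M * x ^ (-2:ℝ) = Real.log M / ωc := by
        rw [integral_const_mul, integral_Ioi_rpow_of_lt (by norm_num) hωc]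
        norm_num
        rw [Real.rpow_neg_one ωc]
        rw [div_eq_mul_inv]
      calc ∫ ω in Ioi ωc, g ω ≤ ∫ x in Ioi ωc, Real.log M * x ^ (-2:ℝ) := hmono
        _ = Real.log M / ωc := hval
    have hsplit : ∫ ω in Ioi (0:ℝ), g ω
        = (∫ ω in Ioc (0:ℝ) ωc, g ω) + ∫ ω in Ioi ωc, g ω := by
      rw [← Ioc_union_Ioi_eq_Ioi hωc.le]
      exact setIntegral_union (Ioc_disjoint_Ioi le_rfl) measurableSet_Ioi hIoc hIoi
    have hKle : K ≤ (Real.log M + Real.log M) / ωc := by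
      rw [hsplit] at hint
      rw [add_div]
      linarith
    have : ωc * K / 2 ≤ Real.log M := by
      rw [le_div_iff₀ hωc] at hKle
      nlinarith
    calc Real.exp (ωc * K / 2) ≤ Real.exp (Real.log M) := Real.exp_le_exp.2 this
      _ = M := Real.exp_log hM0
  · rw [integral_undef hI] at hint
    have : K = 0 := le_antisymm hint hK
    simp [this, Real.exp_zero]
    linarith
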